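/- Let f : ℝ^d → ℝ be differentiable and ρ-semiconvex. For each x ∈ ℝ^d, the Moreau-type envelope z_x(λ) := inf_y [f(y) + (λ/2)‖y − x‖²] is differentiable on (ρ, ∞) with derivative z_x'(λ) = (1/2)‖y*_{λ,x} − x‖², where y*_{λ,x} is the unique minimizer of y ↦ f(y) + (λ/2)‖y − x‖². -/

import Mathlib

set_option maxHeartbeats 1000000


/-- the Moreau-type envelope `z_x(λ) = inf_y [f y + (λ/2)‖y - x‖²]`
(realized through its unique minimizer `y*_{λ,x}`) is differentiable on `(ρ, ∞)`
with derivative `(1/2)‖y*_{λ,x} - x‖²`. -/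
theorem moreau_envelope_hasDerivAt {d : ℕ}
    (f : EuclideanSpace ℝ (Fin d) → ℝ)
    (G : EuclideanSpace ℝ (Fin d) → EuclideanSpace ℝ (Fin d))
    (hG : ∀ y, HasGradientAt f (G y) y)
    (ρ : ℝ) (hρ : 0 ≤ ρ)
    (hsemi : ConvexOn ℝ Set.univ (fun y => f y + ρ / 2 * ‖y‖ ^ 2))
    (x : EuclideanSpace ℝ (Fin d))
    (ystar : ℝ → EuclideanSpace ℝ (Fin d))
    (hmin : ∀ lam, ρ < lam →
      ∀ z, f (ystar lam) + lam / 2 * ‖ystar lam - x‖ ^ 2 ≤ f z + lam / 2 * ‖z - x‖ ^ 2) :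
    ∀ lam, ρ < lam →
      HasDerivAt (fun l : ℝ => f (ystar l) + l / 2 * ‖ystar l - x‖ ^ 2)
        (1 / 2 * ‖ystar lam - x‖ ^ 2) lam := by
  intro lam hlam
  obtain ⟨z, hz⟩ : ∃ g : ℝ → ℝ, ∀ l, g l = f (ystar l) + l / 2 * ‖ystar l - x‖ ^ 2 :=
    ⟨_, fun _ => rfl⟩
  obtain ⟨N, hN⟩ : ∃ g : ℝ → ℝ, ∀ l, g l = ‖ystar l - x‖ ^ 2 := ⟨_, fun _ => rfl⟩
  have hzf : (fun l : ℝ => f (ystar l) + l / 2 * ‖ystar l - x‖ ^ 2) = z := by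
    funext l; rw [hz]
  rw [hzf, show ‖ystar lam - x‖ ^ 2 = N lam from (hN lam).symm]
  -- midpoint identity
  have hmid : ∀ u v : EuclideanSpace ℝ (Fin d),
      ‖(1/2 : ℝ) • u + (1/2 : ℝ) • v‖ ^ 2 = ‖u‖ ^ 2 / 2 + ‖v‖ ^ 2 / 2 - ‖u - v‖ ^ 2 / 4 := by
    intro u v
    have h1 : ‖u + v‖ ^ 2 = ‖u‖ ^ 2 + 2 * inner ℝ u v + ‖v‖ ^ 2 := norm_add_sq_real u v
    have h2 : ‖u - v‖ ^ 2 = ‖u‖ ^ 2 - 2 * inner ℝ u v + ‖v‖ ^ 2 := norm_sub_sq_real u v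
    have h3 : (1/2 : ℝ) • u + (1/2 : ℝ) • v = (1/2 : ℝ) • (u + v) := by module
    rw [h3, norm_smul]
    have h4 : ‖(1/2 : ℝ)‖ = 1/2 := by norm_num [Real.norm_eq_abs]
    rw [h4]
    nlinarith [h1, h2]
  -- strong convexity at the minimizer
  have hstrong : ∀ l, ρ < l → ∀ w : EuclideanSpace ℝ (Fin d),
      (l - ρ) / 4 * ‖w - ystar l‖ ^ 2 ≤ (f w + l / 2 * ‖w - x‖ ^ 2) - z l := by
    intro l hl w
    rw [hz]
    set m : EuclideanSpace ℝ (Fin d) := (1/2 : ℝ) • ystar l + (1/2 : ℝ) • w with hm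
    have hconv : f m + ρ / 2 * ‖m‖ ^ 2 ≤
        (1/2 : ℝ) * (f (ystar l) + ρ / 2 * ‖ystar l‖ ^ 2)
          + (1/2 : ℝ) * (f w + ρ / 2 * ‖w‖ ^ 2) := by
      have h := hsemi.2 (Set.mem_univ (ystar l)) (Set.mem_univ w)
        (by norm_num : (0:ℝ) ≤ 1/2) (by norm_num : (0:ℝ) ≤ 1/2)
        (by norm_num : (1/2:ℝ) + 1/2 = 1)
      rw [smul_eq_mul, smul_eq_mul, ← hm] at h
      exact h
    have hminm := hmin l hl m
    have hmx : m - x = (1/2 : ℝ) • (ystar l - x) + (1/2 : ℝ) • (w - x) := by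
      rw [hm]; module
    have e1 : ‖m - x‖ ^ 2
        = ‖ystar l - x‖ ^ 2 / 2 + ‖w - x‖ ^ 2 / 2 - ‖ystar l - w‖ ^ 2 / 4 := by
      rw [hmx, hmid]
      have h5 : (ystar l - x) - (w - x) = ystar l - w := by abel
      rw [h5]
    have e2 : ‖m‖ ^ 2 = ‖ystar l‖ ^ 2 / 2 + ‖w‖ ^ 2 / 2 - ‖ystar l - w‖ ^ 2 / 4 :=
      hmid (ystar l) w
    have hwy : ‖w - ystar l‖ ^ 2 = ‖ystar l - w‖ ^ 2 := by
      rw [← norm_neg]; congr 1; abel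
    rw [hwy]
    rw [e1] at hminm
    rw [e2] at hconv
    -- now everything is linear in the monomials
    nlinarith [hconv, hminm]
  -- upper bound on increments
  have hupper : ∀ μ l, ρ < μ → ρ < l → z μ - z l ≤ (μ - l) / 2 * N l := by
    intro μ l hμ hl
    have h := hmin μ hμ (ystar l)
    simp only [hz, hN]
    nlinarith [h]
  -- monotonicity of N
  have hmono : ∀ μ l, ρ < l → l < μ → N μ ≤ N l := by
    intro μ l hl hlt
    have h1 := hupper μ l (lt_trans hl hlt) hl
    have h2 := hupper l μ hl (lt_trans hl hlt)
    have hd : 0 < μ - l := by linarith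
    nlinarith [h1, h2]
  obtain ⟨ρ', hρ'⟩ : ∃ r : ℝ, r = (ρ + lam) / 2 := ⟨_, rfl⟩
  have hρ'1 : ρ < ρ' := by rw [hρ']; linarith
  have hρ'2 : ρ' < lam := by rw [hρ']; linarith
  have hN0 : ∀ μ, 0 ≤ N μ := fun μ => by rw [hN]; positivity
  obtain ⟨C, hC⟩ : ∃ c : ℝ, c = N ρ' := ⟨_, rfl⟩
  have hC0 : 0 ≤ C := hC ▸ hN0 ρ'
  have hNC : ∀ μ, ρ' < μ → N μ ≤ C := fun μ hμ => hC ▸ hmono μ ρ' hρ'1 hμ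
  obtain ⟨K, hK⟩ : ∃ k : ℝ, k = 4 * C / (lam - ρ) := ⟨_, rfl⟩
  have hlρ : 0 < lam - ρ := by linarith
  have hK0 : 0 ≤ K := by rw [hK]; positivity
  obtain ⟨a, ha⟩ : ∃ r : ℝ, r = ‖ystar lam - x‖ := ⟨_, rfl⟩
  have ha0 : 0 ≤ a := ha ▸ norm_nonneg _
  -- continuity bound on minimizers
  have hs : ∀ μ, ρ' < μ → ‖ystar μ - ystar lam‖ ^ 2 ≤ K * |μ - lam| := by
    intro μ hμ
    have hμρ : ρ < μ := lt_trans hρ'1 hμ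
    have h1 := hstrong lam hlam (ystar μ)
    have h2 := hupper μ lam hμρ hlam
    have hNμ := hNC μ hμ
    have hNl := hNC lam hρ'2
    have hNμ0 := hN0 μ
    have hNl0 := hN0 lam
    have heq : (f (ystar μ) + lam / 2 * ‖ystar μ - x‖ ^ 2) - z lam
        = (z μ - z lam) + (lam - μ) / 2 * N μ := by
      simp only [hz, hN]; ring
    have h3 : (lam - ρ) / 4 * ‖ystar μ - ystar lam‖ ^ 2 ≤ (lam - μ) / 2 * (N μ - N lam) := by
      rw [heq] at h1; linarith
    rw [hK, div_mul_eq_mul_div, le_div_iff₀ hlρ]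
    rcases abs_cases (μ - lam) with ⟨he, hsgn⟩ | ⟨he, hsgn⟩ <;> rw [he] <;>
      nlinarith [h3, sq_nonneg ‖ystar μ - ystar lam‖]
  -- bound on |N μ - N lam|
  have hNd : ∀ μ, |N μ - N lam| ≤ 2 * a * ‖ystar μ - ystar lam‖ + ‖ystar μ - ystar lam‖ ^ 2 := by
    intro μ
    have huv : (ystar μ - x) - (ystar lam - x) = ystar μ - ystar lam := by abel
    have h1 : |‖ystar μ - x‖ - ‖ystar lam - x‖| ≤ ‖ystar μ - ystar lam‖ := by
      rw [← huv]; exact abs_norm_sub_norm_le _ _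
    obtain ⟨h1a, h1b⟩ := abs_le.mp h1
    rw [hN, hN, ha, abs_le]
    constructor <;>
      nlinarith [norm_nonneg (ystar μ - x), norm_nonneg (ystar lam - x),
        norm_nonneg (ystar μ - ystar lam)]
  -- slope bound
  rw [hasDerivAt_iff_tendsto_slope]
  have hbound : ∀ μ, ρ' < μ → μ ≠ lam →
      |slope z lam μ - 1 / 2 * N lam| ≤ a * Real.sqrt (K * |μ - lam|) + K * |μ - lam| / 2 := by
    intro μ hμ hne
    have hμρ : ρ < μ := lt_trans hρ'1 hμ
    have hub := hupper μ lam hμρ hlam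
    have hlb : (μ - lam) / 2 * N μ ≤ z μ - z lam := by
      have := hupper lam μ hlam hμρ
      nlinarith [this]
    have hdne : μ - lam ≠ 0 := sub_ne_zero.mpr hne
    have hq : slope z lam μ * (μ - lam) = z μ - z lam := by
      rw [slope_def_field, div_mul_cancel₀ _ hdne]
    have step1 : |slope z lam μ - 1 / 2 * N lam| ≤ |N μ - N lam| / 2 := by
      rcases lt_or_gt_of_ne hne with hlt | hgt
      · have hd : μ - lam < 0 := by linarith
        rw [abs_le]
        constructor <;>
          nlinarith [hq, hub, hlb, neg_abs_le (N μ - N lam), le_abs_self (N μ - N lam)]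
      · have hd : 0 < μ - lam := by linarith
        rw [abs_le]
        constructor <;>
          nlinarith [hq, hub, hlb, neg_abs_le (N μ - N lam), le_abs_self (N μ - N lam)]
    have hs2 := hs μ hμ
    have hsle : ‖ystar μ - ystar lam‖ ≤ Real.sqrt (K * |μ - lam|) := by
      calc ‖ystar μ - ystar lam‖ = Real.sqrt (‖ystar μ - ystar lam‖ ^ 2) := by
            rw [Real.sqrt_sq (norm_nonneg _)]
        _ ≤ Real.sqrt (K * |μ - lam|) := Real.sqrt_le_sqrt hs2
    have hNdμ := hNd μ
    have hsqnn : 0 ≤ Real.sqrt (K * |μ - lam|) := Real.sqrt_nonneg _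
    calc |slope z lam μ - 1 / 2 * N lam| ≤ |N μ - N lam| / 2 := step1
      _ ≤ (2 * a * ‖ystar μ - ystar lam‖ + ‖ystar μ - ystar lam‖ ^ 2) / 2 := by linarith
      _ ≤ a * Real.sqrt (K * |μ - lam|) + K * |μ - lam| / 2 := by
          nlinarith [mul_le_mul_of_nonneg_left hsle ha0]
  -- finish by squeeze
  have hgcont : Filter.Tendsto (fun μ : ℝ => a * Real.sqrt (K * |μ - lam|) + K * |μ - lam| / 2)
      (nhdsWithin lam {lam}ᶜ) (nhds 0) := by
    have hc : Continuous (fun μ : ℝ => a * Real.sqrt (K * |μ - lam|) + K * |μ - lam| / 2) := by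
      fun_prop
    have h0 : a * Real.sqrt (K * |lam - lam|) + K * |lam - lam| / 2 = 0 := by
      simp
    have := hc.tendsto lam
    rw [h0] at this
    exact this.mono_left nhdsWithin_le_nhds
  have hmem : ∀ᶠ μ in nhdsWithin lam {lam}ᶜ, ρ' < μ := by
    apply eventually_nhdsWithin_of_eventually_nhds
    exact eventually_gt_nhds hρ'2
  have hne' : ∀ᶠ μ in nhdsWithin lam {lam}ᶜ, μ ≠ lam := by
    filter_upwards [self_mem_nhdsWithin] with μ hμ
    exact hμ
  have hsq : Filter.Tendsto (fun μ => slope z lam μ - 1 / 2 * N lam)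
      (nhdsWithin lam {lam}ᶜ) (nhds 0) := by
    apply squeeze_zero_norm' _ hgcont
    filter_upwards [hmem, hne'] with μ h1 h2
    exact hbound μ h1 h2
  have hfin := hsq.add (tendsto_const_nhds (x := 1 / 2 * N lam))
  simp only [zero_add, sub_add_cancel] at hfin
  exact hfin
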